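/- Let X be a Hausdorff (T2) topological space and κ an infinite cardinal. Assume X is almost discretely Lindelöf and every point of X has a neighborhood basis of cardinality at most κ. Then for every subset D ⊆ X that is discrete in the subspace topology, the closure of D has cardinality at most 2^κ. -/

import Mathlib

open Cardinal Set Filter Topology

/-- A topological space is *almost discretely Lindelöf* if every subset that is
discrete in the subspace topology is contained in a Lindelöf subspace. -/
def AlmostDiscretelyLindelof (X : Type*) [TopologicalSpace X] : Prop :=
  ∀ D : Set X, DiscreteTopology D → ∃ Y : Set X, D ⊆ Y ∧ IsLindelof Y

universe u

noncomputable def ochainAux {ι : Type v} {X : Type u} [LT ι]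
    (wf : WellFounded ((· < ·) : ι → ι → Prop)) (F : Set X → Set X) : ι → Set X :=
  wf.fix (fun i rec => F (⋃ j : {j // j < i}, rec j j.2))

theorem ochainAux_eq {ι : Type v} {X : Type u} [LT ι]
    (wf : WellFounded ((· < ·) : ι → ι → Prop)) (F : Set X → Set X) (i : ι) :
    ochainAux wf F i = F (⋃ j : {j // j < i}, ochainAux wf F j) := by
  rw [ochainAux, WellFounded.fix_eq]

theorem bdd_helper (κ : Cardinal.{u}) (hκ : ℵ₀ ≤ κ)
    (S : Set ((Order.succ κ).ord.ToType)) (hS : #S ≤ κ) : ∃ i, ∀ j ∈ S, j < i := by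
  letI wo : IsWellOrder ((Order.succ κ).ord.ToType) (· < ·) := isWellOrder_lt
  have hreg : (Order.succ κ).IsRegular := Cardinal.isRegular_succ hκ
  have h : #S < Ordinal.cof (Ordinal.type ((· < ·) : (Order.succ κ).ord.ToType →
      (Order.succ κ).ord.ToType → Prop)) := by
    rw [Ordinal.type_toType, hreg.cof_eq]
    exact hS.trans_lt (Order.lt_succ κ)
  exact not_isCofinal_iff.mp fun hc => (Order.cof_le hc).not_gt (by simpa using h)

theorem exists_small_closure {X : Type u} [TopologicalSpace X] (κ : Cardinal.{u})
    (hχ : ∀ x : X, ∃ B : Set (Set X), #B ≤ κ ∧ (∀ b ∈ B, b ∈ 𝓝 x) ∧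
      ∀ s ∈ 𝓝 x, ∃ b ∈ B, b ⊆ s)
    {A : Set X} {x : X} (hx : x ∈ closure A) :
    ∃ C : Set X, C ⊆ A ∧ #C ≤ κ ∧ x ∈ closure C := by
  obtain ⟨B, hB1, hB2, hB3⟩ := hχ x
  have hpick : ∀ b : B, ∃ a, a ∈ (b : Set X) ∩ A := by
    rintro ⟨b, hb⟩
    exact mem_closure_iff_nhds.mp hx b (hB2 b hb)
  choose p hp using hpick
  refine ⟨range p, ?_, ?_, ?_⟩
  · rintro _ ⟨b, rfl⟩; exact (hp b).2
  · exact mk_range_le.trans hB1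
  · rw [mem_closure_iff_nhds]
    intro t ht
    obtain ⟨b, hb, hbt⟩ := hB3 t ht
    exact ⟨p ⟨b, hb⟩, hbt (hp ⟨b, hb⟩).1, mem_range_self _⟩

theorem mk_closure_le {X : Type u} [TopologicalSpace X] [T2Space X] (κ : Cardinal.{u})
    (hκ : ℵ₀ ≤ κ)
    (hχ : ∀ x : X, ∃ B : Set (Set X), #B ≤ κ ∧ (∀ b ∈ B, b ∈ 𝓝 x) ∧
      ∀ s ∈ 𝓝 x, ∃ b ∈ B, b ⊆ s)
    {A : Set X} (hA : #A ≤ 2 ^ κ) : #(closure A) ≤ 2 ^ κ := by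
  rcases A.eq_empty_or_nonempty with rfl | hAne
  · simp
  classical
  set ι : Type u := Quotient.out κ with hι
  have hmkι : #ι = κ := mk_out κ
  -- for each x, a κ-indexed family of neighborhoods whose range includes a basis
  have key : ∀ x : X, ∃ g : ι → Set X, (∀ i, g i ∈ 𝓝 x) ∧ ∀ s ∈ 𝓝 x, ∃ i, g i ⊆ s := by
    intro x
    obtain ⟨B, hB1, hB2, hB3⟩ := hχ x
    obtain ⟨b₀, hb₀, -⟩ := hB3 univ univ_mem
    have : #B ≤ #ι := by rw [hmkι]; exact hB1
    obtain ⟨j⟩ := Cardinal.le_def _ _ |>.mp this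
    refine ⟨Function.extend j Subtype.val (fun _ => b₀), ?_, ?_⟩
    · intro i
      by_cases h : ∃ b : B, j b = i
      · obtain ⟨b, rfl⟩ := h
        rw [j.injective.extend_apply]
        exact hB2 b b.2
      · rw [Function.extend_apply' _ _ _ h]
        exact hB2 b₀ hb₀
    · intro s hs
      obtain ⟨b, hb, hbs⟩ := hB3 s hs
      exact ⟨j ⟨b, hb⟩, by rw [j.injective.extend_apply]; exact hbs⟩
  choose g hg1 hg2 using key
  -- the injection
  have pick : ∀ (x : closure A) (p : ι × ι), ∃ a : A, (a : X) ∈ g x p.1 ∩ g x p.2 := by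
    rintro ⟨x, hx⟩ ⟨i, j⟩
    obtain ⟨a, ha1, ha2⟩ := mem_closure_iff_nhds.mp hx _ (inter_mem (hg1 x i) (hg1 x j))
    exact ⟨⟨a, ha2⟩, ha1⟩
  choose Φ hΦ using pick
  have hinj : Function.Injective Φ := by
    intro x y hxy
    by_contra hne
    have hne' : (x : X) ≠ y := fun h => hne (Subtype.ext h)
    obtain ⟨U, V, hU, hV, hxU, hyV, hUV⟩ := t2_separation hne'
    obtain ⟨i, hiU⟩ := hg2 x U (hU.mem_nhds hxU)
    -- every neighborhood of y meets U
    have : (y : X) ∈ closure U := by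
      rw [mem_closure_iff_nhds]
      intro t ht
      obtain ⟨j, hjt⟩ := hg2 y t ht
      refine ⟨Φ x (i, j), ?_, ?_⟩
      · rw [hxy]
        exact hjt (hΦ y (i, j)).2
      · exact hiU (hΦ x (i, j)).1
    exact absurd (mem_closure_iff_nhds.mp this V (hV.mem_nhds hyV)) (by
      rintro ⟨z, hzV, hzU⟩
      exact (Set.disjoint_iff.mp hUV) ⟨hzU, hzV⟩ )
  calc #(closure A) ≤ #(ι × ι → A) := mk_le_of_injective hinj
    _ = (#A) ^ (#(ι × ι)) := (Cardinal.power_def _ _).symm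
    _ = (#A) ^ (κ * κ) := by
        simp [Cardinal.mk_prod, hmkι]
    _ = (#A) ^ κ := by rw [Cardinal.mul_eq_self hκ]
    _ ≤ (2 ^ κ) ^ κ := by
        apply Cardinal.power_le_power_right hA
    _ = 2 ^ κ := by rw [← Cardinal.power_mul, Cardinal.mul_eq_self hκ]

theorem mk_lindelof_le {X : Type u} [TopologicalSpace X] [T2Space X] (κ : Cardinal.{u})
    (hκ : ℵ₀ ≤ κ)
    (hχ : ∀ x : X, ∃ B : Set (Set X), #B ≤ κ ∧ (∀ b ∈ B, b ∈ 𝓝 x) ∧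
      ∀ s ∈ 𝓝 x, ∃ b ∈ B, b ⊆ s)
    {Y : Set X} (hY : IsLindelof Y) : #Y ≤ 2 ^ κ := by
  classical
  rcases Y.eq_empty_or_nonempty with rfl | ⟨y₀, hy₀⟩
  · simp
  have h2κ : ℵ₀ ≤ 2 ^ κ := hκ.trans (Cardinal.cantor κ).le
  choose B hB1 hB2 hB3 using hχ
  -- witness function
  have hwitex : ∀ F : Set (Set X), ∃ w, w ∈ Y ∧ (¬ Y ⊆ ⋃₀ F → w ∉ ⋃₀ F) := by
    intro F
    by_cases h : Y ⊆ ⋃₀ F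
    · exact ⟨y₀, hy₀, fun hc => absurd h hc⟩
    · obtain ⟨w, hw⟩ := diff_nonempty.mpr h
      exact ⟨w, hw.1, fun _ => hw.2⟩
  choose wit hwitY hwit2 using hwitex
  -- the step operation
  set fam : Set X → Set (Set (Set X)) := fun A =>
    {F | F ⊆ (⋃ x ∈ A, B x) ∧ #F ≤ κ ∧ ¬ Y ⊆ ⋃₀ F} with hfam
  set step : Set X → Set X := fun A => (A ∪ closure A ∩ Y) ∪ wit '' fam A with hstep
  have hsub_step : ∀ A, A ⊆ step A := fun A => subset_union_left.trans subset_union_left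
  have hstepY : ∀ A, A ⊆ Y → step A ⊆ Y := by
    intro A hA
    rintro x ((hx | hx) | hx)
    · exact hA hx
    · exact hx.2
    · obtain ⟨F, -, rfl⟩ := hx; exact hwitY F
  have hstep_card : ∀ A : Set X, #A ≤ 2 ^ κ → #(step A) ≤ 2 ^ κ := by
    intro A hA
    have h1 : #(closure A ∩ Y : Set X) ≤ 2 ^ κ :=
      (mk_le_mk_of_subset inter_subset_left).trans
        (mk_closure_le κ hκ (fun x => ⟨B x, hB1 x, hB2 x, hB3 x⟩) hA)
    have hS : #(⋃ x ∈ A, B x) ≤ 2 ^ κ := by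
      refine (mk_biUnion_le B A).trans ?_
      have hsup : ⨆ x : A, #(B x) ≤ κ := by
        rcases isEmpty_or_nonempty A with h | h
        · rw [ciSup_of_empty]; exact bot_le
        · exact ciSup_le' fun x => hB1 x
      calc #A * ⨆ x : A, #(B (x : X)) ≤ (2 ^ κ) * (2 ^ κ) :=
            mul_le_mul' hA (hsup.trans (Cardinal.cantor κ).le)
        _ = 2 ^ κ := mul_eq_self h2κ
    have h2 : #(wit '' fam A) ≤ 2 ^ κ := by
      refine mk_image_le.trans ?_
      have hemb : #(fam A) ≤ #{t : Set (Set X) // t ⊆ (⋃ x ∈ A, B x) ∧ #t ≤ κ} := by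
        refine mk_le_of_injective (f := fun F => ⟨F.1, F.2.1, F.2.2.1⟩) ?_
        intro a b h
        apply Subtype.ext
        have h' := congrArg Subtype.val h
        simpa using h'
      refine hemb.trans ((mk_bounded_subset_le _ κ).trans ?_)
      calc max #(⋃ x ∈ A, B x) ℵ₀ ^ κ ≤ (2 ^ κ) ^ κ :=
            Cardinal.power_le_power_right (max_le hS h2κ)
        _ = 2 ^ κ := by rw [← Cardinal.power_mul, Cardinal.mul_eq_self hκ]
    calc #(step A) ≤ #((A ∪ closure A ∩ Y : Set X)) + #(wit '' fam A) := mk_union_le _ _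
      _ ≤ (#A + #(closure A ∩ Y : Set X)) + #(wit '' fam A) :=
          add_le_add_left (mk_union_le _ _) _
      _ ≤ (2 ^ κ + 2 ^ κ) + 2 ^ κ := by
          exact add_le_add (add_le_add hA h1) h2
      _ = 2 ^ κ := by rw [add_eq_self h2κ, add_eq_self h2κ]
  -- the transfinite chain
  set ι : Type u := (Order.succ κ).ord.ToType with hiota
  have wf : WellFounded ((· < ·) : ι → ι → Prop) := wellFounded_lt
  set H : ι → Set X := ochainAux wf step with hH
  set pre : ι → Set X := fun i => ⋃ j : {j // j < i}, H j with hpreD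
  have hHeq : ∀ i, H i = step (pre i) := fun i => ochainAux_eq wf step i
  have hmono : ∀ {j i : ι}, j < i → H j ⊆ pre i := by
    intro j i h
    exact subset_iUnion (fun j : {j // j < i} => H j) ⟨j, h⟩
  have hHY : ∀ i, H i ⊆ Y := by
    intro i
    induction i using wf.induction with
    | _ i IH =>
      rw [hHeq i]
      exact hstepY _ (iUnion_subset fun j => IH j j.2)
  have hcard : ∀ i, #(H i) ≤ 2 ^ κ := by
    intro i
    induction i using wf.induction with
    | _ i IH =>
      rw [hHeq i]
      apply hstep_card
      refine (mk_iUnion_le _).trans ?_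
      have h1 : #{j : ι // j < i} ≤ 2 ^ κ := by
        refine mk_subtype_le _ |>.trans ?_
        rw [hiota, Cardinal.mk_toType, Cardinal.card_ord]
        exact Order.succ_le_of_lt (Cardinal.cantor κ)
      have h2 : ⨆ j : {j : ι // j < i}, #(H j) ≤ 2 ^ κ := by
        rcases isEmpty_or_nonempty {j : ι // j < i} with h | h
        · rw [ciSup_of_empty]; exact bot_le
        · exact ciSup_le' fun j => IH j j.2
      calc #{j : ι // j < i} * ⨆ j : {j : ι // j < i}, #(H (j : ι)) ≤ (2 ^ κ) * (2 ^ κ) :=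
            mul_le_mul' h1 h2
        _ = 2 ^ κ := mul_eq_self h2κ
  set Hinf : Set X := ⋃ i, H i with hHinfD
  have hHinfY : Hinf ⊆ Y := iUnion_subset hHY
  have hclosed : closure Hinf ∩ Y ⊆ Hinf := by
    rintro x ⟨hxc, hxY⟩
    obtain ⟨C, hC1, hC2, hC3⟩ :=
      exists_small_closure κ (fun x => ⟨B x, hB1 x, hB2 x, hB3 x⟩) hxc
    have hex : ∀ c : C, ∃ i, (c : X) ∈ H i := fun c => mem_iUnion.mp (hC1 c.2)
    choose idx hidx using hex
    obtain ⟨i, hi⟩ := bdd_helper κ hκ (range idx) (mk_range_le.trans hC2)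
    have hCpre : C ⊆ pre i := by
      intro c hc
      exact hmono (hi _ (mem_range_self ⟨c, hc⟩)) (hidx ⟨c, hc⟩)
    have hx2 : x ∈ step (pre i) :=
      Or.inl (Or.inr ⟨closure_mono hCpre hC3, hxY⟩)
    rw [← hHeq i] at hx2
    exact mem_iUnion.mpr ⟨i, hx2⟩
  have hHinf_eq : Hinf = Y ∩ closure Hinf := by
    apply Subset.antisymm
    · exact fun x hx => ⟨hHinfY hx, subset_closure hx⟩
    · rintro x ⟨h1x, h2x⟩; exact hclosed ⟨h2x, h1x⟩
  have hLin : IsLindelof Hinf := by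
    rw [hHinf_eq]
    exact hY.inter_right isClosed_closure
  -- Y is contained in the chain union
  have hYH : Y ⊆ Hinf := by
    by_contra hns
    obtain ⟨q, hqY, hqH⟩ := not_subset.mp hns
    have hbex : ∀ x : Hinf, ∃ b, b ∈ B x ∧ (x : X) ∈ interior b ∧ q ∉ b := by
      intro x
      have hne : (x : X) ≠ q := fun h => hqH (h ▸ x.2)
      obtain ⟨U, V, hU, hV, hxU, hqV, hUV⟩ := t2_separation hne
      obtain ⟨b, hb, hbU⟩ := hB3 x U (hU.mem_nhds hxU)
      refine ⟨b, hb, mem_interior_iff_mem_nhds.mpr (hB2 _ b hb), fun hq => ?_⟩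
      exact Set.disjoint_left.mp hUV (hbU hq) hqV
    choose b hb1 hb2 hb3 using hbex
    have hcov : Hinf ⊆ ⋃ x : Hinf, interior (b x) :=
      fun x hx => mem_iUnion.mpr ⟨⟨x, hx⟩, hb2 ⟨x, hx⟩⟩
    obtain ⟨r, hrct, hrcov⟩ := hLin.elim_countable_subcover _ (fun _ => isOpen_interior) hcov
    have hex : ∀ x : r, ∃ i, ((x : Hinf) : X) ∈ H i := fun x => mem_iUnion.mp (x.1).2
    choose idx hidx using hex
    have hrκ : #r ≤ κ := (hrct.le_aleph0).trans hκ
    obtain ⟨i, hi⟩ := bdd_helper κ hκ (range idx) (mk_range_le.trans hrκ)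
    have hFfam : (b '' r) ∈ fam (pre i) := by
      refine ⟨?_, ?_, ?_⟩
      · rintro f ⟨x, hx, rfl⟩
        exact mem_biUnion (hmono (hi _ (mem_range_self ⟨x, hx⟩)) (hidx ⟨x, hx⟩)) (hb1 x)
      · exact ((hrct.image b).le_aleph0).trans hκ
      · intro hYF
        obtain ⟨f, hf, hqf⟩ := hYF hqY
        obtain ⟨x, -, rfl⟩ := hf
        exact hb3 x hqf
    have hw : wit (b '' r) ∈ Hinf := by
      refine mem_iUnion.mpr ⟨i, ?_⟩
      rw [hHeq i]
      exact Or.inr (mem_image_of_mem wit hFfam)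
    have hHsub : Hinf ⊆ ⋃₀ (b '' r) := by
      refine hrcov.trans ?_
      rintro z hz
      obtain ⟨x, hx, hzx⟩ := mem_iUnion₂.mp hz
      exact ⟨b x, mem_image_of_mem b hx, interior_subset hzx⟩
    exact hwit2 _ hFfam.2.2 (hHsub hw)
  calc #Y ≤ #Hinf := mk_le_mk_of_subset hYH
    _ ≤ #ι * ⨆ i, #(H i) := mk_iUnion_le _
    _ ≤ (2 ^ κ) * (2 ^ κ) := by
        refine mul_le_mul' ?_ ?_
        · rw [hiota, Cardinal.mk_toType, Cardinal.card_ord]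
          exact Order.succ_le_of_lt (Cardinal.cantor κ)
        · have : Nonempty ι := by
            rw [hiota]
            refine Ordinal.toType_nonempty_iff_ne_zero.mpr ?_
            have hpos : (0 : Cardinal) < Order.succ κ :=
              lt_of_le_of_lt (zero_le : (0 : Cardinal) ≤ κ) (Order.lt_succ κ)
            simp [Cardinal.ord_eq_zero]
          exact ciSup_le' hcard
    _ = 2 ^ κ := mul_eq_self h2κ

theorem closure_discrete_card_le_of_almostDiscretelyLindelof
    {X : Type u} [TopologicalSpace X] [T2Space X] (κ : Cardinal.{u})
    (hκ : ℵ₀ ≤ κ)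
    (hADL : AlmostDiscretelyLindelof X)
    (hχ : ∀ x : X, ∃ B : Set (Set X), #B ≤ κ ∧ (∀ b ∈ B, b ∈ 𝓝 x) ∧
      ∀ s ∈ 𝓝 x, ∃ b ∈ B, b ⊆ s) :
    ∀ D : Set X, DiscreteTopology D → #(closure D) ≤ 2 ^ κ := by
  intro D hD
  obtain ⟨Y, hDY, hY⟩ := hADL D hD
  have hYcard : #Y ≤ 2 ^ κ := mk_lindelof_le κ hκ hχ hY
  have hDcard : #D ≤ 2 ^ κ := (mk_le_mk_of_subset hDY).trans hYcard
  exact mk_closure_le κ hκ hχ hDcard
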